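/- Let a be a positive integer, c an integer coprime to a, and γ an integer. Then s(c, a; (c·γ + 1/2)/a, 0) = s(c, a; (c·γ)/a, 0) + (1/2)·((γ/a)). -/

import Mathlib

open scoped BigOperators

/-- The sawtooth function `((x))`: `x - ⌊x⌋ - 1/2` if `x` is not an integer, `0` otherwise. -/
noncomputable def sawtooth (x : ℝ) : ℝ :=
  if Int.fract x = 0 then 0 else Int.fract x - 1/2

/-- The Dedekind–Rademacher sum `s(b, a; x, y)`. -/
noncomputable def drSum (b : ℤ) (a : ℕ) (x y : ℝ) : ℝ :=
  ∑ j ∈ Finset.range a, sawtooth (x + b * ((j : ℝ) + y) / a) * sawtooth (((j : ℝ) + y) / a)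

lemma sawtooth_int_add (n : ℤ) (x : ℝ) : sawtooth ((n : ℝ) + x) = sawtooth x := by
  unfold sawtooth
  rw [Int.fract_intCast_add]

lemma sawtooth_neg (x : ℝ) : sawtooth (-x) = -sawtooth x := by
  unfold sawtooth
  by_cases h : Int.fract x = 0
  · have h' : Int.fract (-x) = 0 := Int.fract_neg_eq_zero.mpr h
    simp [h, h']
  · have h' : Int.fract (-x) ≠ 0 := fun hz => h (Int.fract_neg_eq_zero.mp hz)
    rw [if_neg h', if_neg h, Int.fract_neg h]
    ring

lemma fract_int_div (a : ℕ) (ha : 0 < a) (m : ℤ) :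
    Int.fract ((m : ℝ) / a) = ((m % (a : ℤ) : ℤ) : ℝ) / a := by
  have haR : (0 : ℝ) < a := by exact_mod_cast ha
  have hm : (a : ℤ) * (m / (a : ℤ)) + m % (a : ℤ) = m := Int.mul_ediv_add_emod m a
  have hr0 : (0 : ℤ) ≤ m % (a : ℤ) := Int.emod_nonneg m (by exact_mod_cast ha.ne')
  have hr1 : m % (a : ℤ) < a := Int.emod_lt_of_pos m (by exact_mod_cast ha)
  have h1 : (m : ℝ) / a = ((m / (a : ℤ) : ℤ) : ℝ) + ((m % (a : ℤ) : ℤ) : ℝ) / a := by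
    have : (m : ℝ) = a * ((m / (a : ℤ) : ℤ) : ℝ) + ((m % (a : ℤ) : ℤ) : ℝ) := by
      exact_mod_cast hm.symm
    rw [this]; field_simp
  rw [h1, Int.fract_intCast_add, Int.fract_eq_self.2 ⟨by positivity, by
    rw [div_lt_one haR]; exact_mod_cast hr1⟩]

lemma fract_int_half_div (a : ℕ) (ha : 0 < a) (m : ℤ) :
    Int.fract (((m : ℝ) + 1/2) / a) = (((m % (a : ℤ) : ℤ) : ℝ) + 1/2) / a := by
  have haR : (0 : ℝ) < a := by exact_mod_cast ha
  have hm : (a : ℤ) * (m / (a : ℤ)) + m % (a : ℤ) = m := Int.mul_ediv_add_emod m a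
  have hr0 : (0 : ℤ) ≤ m % (a : ℤ) := Int.emod_nonneg m (by exact_mod_cast ha.ne')
  have hr1 : m % (a : ℤ) < a := Int.emod_lt_of_pos m (by exact_mod_cast ha)
  have hr0R : (0 : ℝ) ≤ ((m % (a : ℤ) : ℤ) : ℝ) := by exact_mod_cast hr0
  have hr1R : ((m % (a : ℤ) : ℤ) : ℝ) < a := by exact_mod_cast hr1
  have haR1 : (1 : ℝ) ≤ a := by exact_mod_cast ha
  have h1 : ((m : ℝ) + 1/2) / a
      = ((m / (a : ℤ) : ℤ) : ℝ) + (((m % (a : ℤ) : ℤ) : ℝ) + 1/2) / a := by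
    have : (m : ℝ) = a * ((m / (a : ℤ) : ℤ) : ℝ) + ((m % (a : ℤ) : ℤ) : ℝ) := by
      exact_mod_cast hm.symm
    rw [this]; field_simp; ring
  have hr1' : ((m % (a : ℤ) : ℤ) : ℝ) + 1 ≤ a := by exact_mod_cast hr1
  rw [h1, Int.fract_intCast_add, Int.fract_eq_self.2 ⟨by positivity, by
    rw [div_lt_one haR]
    linarith⟩]

lemma sawtooth_half_shift (a : ℕ) (ha : 0 < a) (m : ℤ) :
    sawtooth (((m : ℝ) + 1/2) / a)
      = sawtooth ((m : ℝ) / a) + 1/(2*a) - (if (a : ℤ) ∣ m then (1/2 : ℝ) else 0) := by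
  have haR : (0 : ℝ) < a := by exact_mod_cast ha
  have hr0 : (0 : ℤ) ≤ m % (a : ℤ) := Int.emod_nonneg m (by exact_mod_cast ha.ne')
  have hr0R : (0 : ℝ) ≤ ((m % (a : ℤ) : ℤ) : ℝ) := by exact_mod_cast hr0
  have hdvd : (a : ℤ) ∣ m ↔ m % (a : ℤ) = 0 := Int.dvd_iff_emod_eq_zero
  have hne : (((m % (a : ℤ) : ℤ) : ℝ) + 1/2) / a ≠ 0 := by positivity
  unfold sawtooth
  rw [fract_int_div a ha m, fract_int_half_div a ha m, if_neg hne]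
  by_cases h : m % (a : ℤ) = 0
  · rw [if_pos (hdvd.mpr h), h]
    push_cast
    rw [if_pos (by simp)]
    field_simp
    ring
  · have hR : ((m % (a : ℤ) : ℤ) : ℝ) ≠ 0 := by exact_mod_cast h
    have hne2 : ((m % (a : ℤ) : ℤ) : ℝ) / a ≠ 0 := by
      exact div_ne_zero hR haR.ne'
    rw [if_neg (fun hx => hdvd.mp hx |> h), if_neg hne2]
    field_simp
    ring

lemma sum_sawtooth_eq_zero (a : ℕ) (ha : 0 < a) :
    ∑ j ∈ Finset.range a, sawtooth ((j : ℝ) / a) = 0 := by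
  have haR : (0 : ℝ) < a := by exact_mod_cast ha
  have key : ∀ j ∈ Finset.range a,
      sawtooth ((j : ℝ) / a) = (if j = 0 then (1/2 : ℝ) else 0) + ((j : ℝ) / a - 1/2) := by
    intro j hj
    have hj' : j < a := Finset.mem_range.mp hj
    have h0 : (0 : ℝ) ≤ (j : ℝ) / a := by positivity
    have h1 : (j : ℝ) / a < 1 := by
      rw [div_lt_one haR]; exact_mod_cast hj'
    unfold sawtooth
    rw [Int.fract_eq_self.2 ⟨h0, h1⟩]
    by_cases hj0 : j = 0
    · subst hj0; simp
    · have : ((j : ℝ) / a) ≠ 0 := by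
        have : (j : ℝ) ≠ 0 := by exact_mod_cast hj0
        positivity
      rw [if_neg this, if_neg hj0]; ring
  rw [Finset.sum_congr rfl key, Finset.sum_add_distrib, Finset.sum_ite_eq' (Finset.range a) 0
    (fun _ => (1/2 : ℝ)), if_pos (Finset.mem_range.mpr ha), Finset.sum_sub_distrib]
  have gauss : (∑ j ∈ Finset.range a, (j : ℝ)) = a * (a - 1) / 2 := by
    have := Finset.sum_range_id_mul_two a
    have h2 : ((∑ i ∈ Finset.range a, i) * 2 : ℕ) = (a * (a - 1) : ℕ) := this
    have h3 : ((∑ i ∈ Finset.range a, (i:ℝ)) * 2 : ℝ) = a * ((a:ℝ) - 1) := by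
      have h2' : (((∑ i ∈ Finset.range a, i) * 2 : ℕ) : ℝ) = ((a * (a - 1) : ℕ) : ℝ) := by
        exact_mod_cast h2
      push_cast [Nat.cast_sub ha] at h2'
      linarith
    linarith
  have hsum : (∑ j ∈ Finset.range a, (j : ℝ) / a) = ((a:ℝ) - 1) / 2 := by
    rw [← Finset.sum_div, gauss]
    field_simp
  rw [hsum, Finset.sum_const, Finset.card_range]
  ring

theorem drSum_half_numerator_shift (a : ℕ) (ha : 0 < a) (c γ : ℤ) (hc : Int.gcd c a = 1) :
    drSum c a (((c : ℝ) * (γ : ℝ) + 1/2) / a) 0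
      = drSum c a ((c : ℝ) * (γ : ℝ) / a) 0 + (1/2) * sawtooth ((γ : ℝ) / a) := by
  classical
  have haZ : (0 : ℤ) < a := by exact_mod_cast ha
  have haR : (0 : ℝ) < a := by exact_mod_cast ha
  set j₀ : ℕ := ((-γ) % (a : ℤ)).toNat with hj₀def
  have hj₀Z : (j₀ : ℤ) = (-γ) % (a : ℤ) :=
    Int.toNat_of_nonneg (Int.emod_nonneg _ haZ.ne')
  have hj₀a : j₀ < a := by
    have := Int.emod_lt_of_pos (-γ) haZ
    omega
  have hco : IsCoprime (a : ℤ) c := by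
    rw [Int.isCoprime_iff_gcd_eq_one, Int.gcd_comm]
    exact hc
  -- the key pointwise identity
  have key : ∀ j ∈ Finset.range a,
      sawtooth (((c : ℝ) * (γ : ℝ) + 1/2) / a + c * ((j : ℝ) + 0) / a)
          * sawtooth (((j : ℝ) + 0) / a)
        = sawtooth ((c : ℝ) * (γ : ℝ) / a + c * ((j : ℝ) + 0) / a)
            * sawtooth (((j : ℝ) + 0) / a)
          + (1/(2*a)) * sawtooth ((j : ℝ) / a)
          - (if j = j₀ then (1/2) * sawtooth ((j : ℝ) / a) else 0) := by
    intro j hj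
    have hj' : j < a := Finset.mem_range.mp hj
    have e1 : ((c : ℝ) * (γ : ℝ) + 1/2) / a + c * ((j : ℝ) + 0) / a
        = (((c * (γ + j) : ℤ) : ℝ) + 1/2) / a := by
      push_cast; ring
    have e2 : (c : ℝ) * (γ : ℝ) / a + c * ((j : ℝ) + 0) / a
        = ((c * (γ + j) : ℤ) : ℝ) / a := by
      push_cast; ring
    have hdvd : (a : ℤ) ∣ c * (γ + (j : ℤ)) ↔ j = j₀ := by
      constructor
      · intro h
        have h2 : (a : ℤ) ∣ γ + j := hco.dvd_of_dvd_mul_left h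
        have h3 : (j : ℤ) % a = (-γ) % a :=
          Int.ModEq.eq (Int.modEq_iff_dvd.mpr (by
            have := dvd_neg.mpr h2
            have heq : -γ - (j : ℤ) = -(γ + j) := by ring
            rwa [heq]))
        have hje : (j : ℤ) % a = j :=
          Int.emod_eq_of_lt (by positivity) (by exact_mod_cast hj')
        omega
      · intro h
        subst h
        refine Dvd.dvd.mul_left ?_ c
        have hq : (j₀ : ℤ) = -γ - a * ((-γ) / a) := by
          rw [hj₀Z, Int.emod_def]
        exact ⟨-((-γ) / a), by rw [hq]; ring⟩
    rw [e1, e2, sawtooth_half_shift a ha (c * (γ + j)), if_congr hdvd rfl rfl]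
    have h00 : ((j : ℝ) + 0) = (j : ℝ) := by ring
    rw [h00]
    split_ifs <;> ring
  rw [drSum, drSum, Finset.sum_congr rfl key]
  rw [Finset.sum_sub_distrib, Finset.sum_add_distrib, ← Finset.mul_sum,
    sum_sawtooth_eq_zero a ha,
    Finset.sum_ite_eq' (Finset.range a) j₀ (fun j => (1/2) * sawtooth ((j : ℝ) / a)),
    if_pos (Finset.mem_range.mpr hj₀a)]
  have hst : sawtooth ((j₀ : ℝ) / a) = - sawtooth ((γ : ℝ) / a) := by
    have hq : (j₀ : ℤ) = -γ - a * ((-γ) / a) := by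
      rw [hj₀Z, Int.emod_def]
    have h1 : (j₀ : ℝ) / a = ((-((-γ) / a) : ℤ) : ℝ) + (-(γ : ℝ)) / a := by
      have : (j₀ : ℝ) = -(γ : ℝ) - (a : ℝ) * (((-γ) / a : ℤ) : ℝ) := by
        exact_mod_cast hq
      rw [this]; field_simp; push_cast; ring
    rw [h1, sawtooth_int_add, neg_div, sawtooth_neg]
  rw [hst]
  ring
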